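/- For an integer k ≥ 3 and a real number z with 0 < z < 1, one has 0 ≤ Li_{1,k-1}(z,z) - Li_{1,k-1}(z,z^3) ≤ 2(1-z)·Li_{1,1}(z,z), where Li_{1,k-1}(z1,z2) = Σ_{m1>m2>0} z1^{m1-m2} z2^{m2}/(m1·m2^{k-1}). -/

import Mathlib

noncomputable def rLi2 (k1 k2 : ℕ) (z1 z2 : ℝ) : ℝ :=
  ∑' p : ℕ × ℕ, if p.2 < p.1 ∧ 0 < p.2 then
    z1 ^ (p.1 - p.2) * z2 ^ p.2 / ((p.1 : ℝ) ^ k1 * (p.2 : ℝ) ^ k2) else 0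

lemma one_sub_pow_le_aux (z : ℝ) (h0 : 0 ≤ z) (h1 : z ≤ 1) (n : ℕ) :
    1 - z ^ n ≤ n * (1 - z) := by
  induction n with
  | zero => simp
  | succ n ih =>
    have hzn : 0 ≤ 1 - z ^ n := by
      have := pow_le_one₀ h0 h1 (n := n); linarith
    have hz : z * (1 - z ^ n) ≤ 1 - z ^ n := mul_le_of_le_one_left hzn h1
    have heq : (1 : ℝ) - z ^ (n + 1) = (1 - z) + z * (1 - z ^ n) := by ring
    rw [heq]
    push_cast
    nlinarith

lemma summable_rLi2_aux (k1 k2 : ℕ) (z1 z2 : ℝ) (h10 : 0 ≤ z1) (h11 : z1 < 1)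
    (h20 : 0 ≤ z2) (h21 : z2 < 1) :
    Summable (fun p : ℕ × ℕ => if p.2 < p.1 ∧ 0 < p.2 then
      z1 ^ (p.1 - p.2) * z2 ^ p.2 / ((p.1 : ℝ) ^ k1 * (p.2 : ℝ) ^ k2) else 0) := by
  set f : ℕ × ℕ → ℝ := fun p => if p.2 < p.1 ∧ 0 < p.2 then
      z1 ^ (p.1 - p.2) * z2 ^ p.2 / ((p.1 : ℝ) ^ k1 * (p.2 : ℝ) ^ k2) else 0 with hf
  have hι : Function.Injective (fun q : ℕ × ℕ => (q.1 + q.2 + 1, q.2)) := by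
    intro a b h
    simp only [Prod.mk.injEq] at h
    exact Prod.ext (by omega) h.2
  have hzero : ∀ p ∉ Set.range (fun q : ℕ × ℕ => (q.1 + q.2 + 1, q.2)), f p = 0 := by
    rintro ⟨a, b⟩ hp
    have hlt : ¬ b < a := by
      intro hlt
      exact hp ⟨(a - b - 1, b), by simp only [Prod.mk.injEq, and_true]; omega⟩
    simp [hf, hlt]
  rw [← Function.Injective.summable_iff hι hzero]
  have hsum : Summable (fun q : ℕ × ℕ => z1 ^ q.1 * z2 ^ q.2) :=
    (summable_geometric_of_lt_one h10 h11).mul_of_nonneg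
      (summable_geometric_of_lt_one h20 h21)
      (fun n => pow_nonneg h10 n) (fun n => pow_nonneg h20 n)
  apply Summable.of_nonneg_of_le _ _ hsum
  · intro q
    simp only [Function.comp, hf]
    split
    · positivity
    · exact le_refl 0
  · intro q
    simp only [Function.comp, hf]
    split
    · rename_i hq
      have hm2 : 0 < q.2 := hq.2
      have h1' : (1 : ℝ) ≤ ((q.1 + q.2 + 1 : ℕ) : ℝ) := by
        exact_mod_cast Nat.one_le_iff_ne_zero.mpr (by omega)
      have h2' : (1 : ℝ) ≤ ((q.2 : ℕ) : ℝ) := by exact_mod_cast hm2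
      have hden : (1 : ℝ) ≤ ((q.1 + q.2 + 1 : ℕ) : ℝ) ^ k1 * ((q.2 : ℕ) : ℝ) ^ k2 := by
        have ha := one_le_pow₀ h1' (n := k1)
        have hb := one_le_pow₀ h2' (n := k2)
        nlinarith
      have hnum : 0 ≤ z1 ^ (q.1 + q.2 + 1 - q.2) * z2 ^ q.2 := by positivity
      calc z1 ^ (q.1 + q.2 + 1 - q.2) * z2 ^ q.2
            / (((q.1 + q.2 + 1 : ℕ) : ℝ) ^ k1 * ((q.2 : ℕ) : ℝ) ^ k2)
          ≤ z1 ^ (q.1 + q.2 + 1 - q.2) * z2 ^ q.2 := div_le_self hnum hden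
        _ = z1 ^ q.1 * z1 * z2 ^ q.2 := by
            have he : q.1 + q.2 + 1 - q.2 = q.1 + 1 := by omega
            rw [he, pow_succ]
        _ ≤ z1 ^ q.1 * z2 ^ q.2 := by
            have hle : z1 ^ q.1 * z1 ≤ z1 ^ q.1 * 1 :=
              mul_le_mul_of_nonneg_left (le_of_lt h11) (pow_nonneg h10 _)
            nlinarith [pow_nonneg h20 q.2, pow_nonneg h10 q.1]
    · positivity

theorem polylog_difference_bound (k : ℕ) (hk : 3 ≤ k) (z : ℝ) (h0 : 0 < z) (h1 : z < 1) :
    0 ≤ rLi2 1 (k - 1) z z - rLi2 1 (k - 1) z (z ^ 3) ∧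
    rLi2 1 (k - 1) z z - rLi2 1 (k - 1) z (z ^ 3) ≤ 2 * (1 - z) * rLi2 1 1 z z := by
  have hz0 : (0:ℝ) ≤ z := h0.le
  have hz30 : (0:ℝ) ≤ z ^ 3 := by positivity
  have hz31 : z ^ 3 < 1 := pow_lt_one₀ hz0 h1 (by norm_num)
  set A : ℕ × ℕ → ℝ := fun p => if p.2 < p.1 ∧ 0 < p.2 then
      z ^ (p.1 - p.2) * z ^ p.2 / ((p.1 : ℝ) ^ 1 * (p.2 : ℝ) ^ (k - 1)) else 0 with hA
  set B : ℕ × ℕ → ℝ := fun p => if p.2 < p.1 ∧ 0 < p.2 then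
      z ^ (p.1 - p.2) * (z ^ 3) ^ p.2 / ((p.1 : ℝ) ^ 1 * (p.2 : ℝ) ^ (k - 1)) else 0 with hB
  set C : ℕ × ℕ → ℝ := fun p => if p.2 < p.1 ∧ 0 < p.2 then
      z ^ (p.1 - p.2) * z ^ p.2 / ((p.1 : ℝ) ^ 1 * (p.2 : ℝ) ^ 1) else 0 with hC
  have hAs : Summable A := summable_rLi2_aux 1 (k - 1) z z hz0 h1 hz0 h1
  have hBs : Summable B := summable_rLi2_aux 1 (k - 1) z (z ^ 3) hz0 h1 hz30 hz31
  have hCs : Summable C := summable_rLi2_aux 1 1 z z hz0 h1 hz0 h1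
  have hdiff : rLi2 1 (k - 1) z z - rLi2 1 (k - 1) z (z ^ 3) = ∑' p, (A p - B p) := by
    rw [rLi2, rLi2, ← Summable.tsum_sub hAs hBs]
  -- pointwise nonnegativity of A - B
  have hnonneg : ∀ p : ℕ × ℕ, 0 ≤ A p - B p := by
    intro p
    by_cases hp : p.2 < p.1 ∧ 0 < p.2
    · simp only [hA, hB, if_pos hp]
      have hm1 : (0:ℝ) < (p.1 : ℝ) := by exact_mod_cast Nat.lt_of_lt_of_le hp.2 hp.1.le
      have hm2 : (0:ℝ) < (p.2 : ℝ) := by exact_mod_cast hp.2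
      have hpow : (z ^ 3) ^ p.2 ≤ z ^ p.2 := by
        rw [← pow_mul]
        exact pow_le_pow_of_le_one hz0 h1.le (by omega)
      have hD : (0:ℝ) < (p.1 : ℝ) ^ 1 * (p.2 : ℝ) ^ (k - 1) := by positivity
      have : z ^ (p.1 - p.2) * (z ^ 3) ^ p.2 / ((p.1 : ℝ) ^ 1 * (p.2 : ℝ) ^ (k - 1))
          ≤ z ^ (p.1 - p.2) * z ^ p.2 / ((p.1 : ℝ) ^ 1 * (p.2 : ℝ) ^ (k - 1)) := by
        gcongr
      linarith
    · simp [hA, hB, hp]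
  -- pointwise bound: A p - B p ≤ 2 * (1 - z) * C p
  have hbound : ∀ p : ℕ × ℕ, A p - B p ≤ 2 * (1 - z) * C p := by
    intro p
    by_cases hp : p.2 < p.1 ∧ 0 < p.2
    · simp only [hA, hB, hC, if_pos hp]
      obtain ⟨hlt, hm2pos⟩ := hp
      have hm1pos : 0 < p.1 := Nat.lt_of_lt_of_le hm2pos hlt.le
      have hm1 : (1:ℝ) ≤ (p.1 : ℝ) := by exact_mod_cast hm1pos
      have hm2 : (1:ℝ) ≤ (p.2 : ℝ) := by exact_mod_cast hm2pos
      have key : 1 - z ^ (2 * p.2) ≤ 2 * p.2 * (1 - z) := by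
        have := one_sub_pow_le_aux z hz0 h1.le (2 * p.2)
        push_cast at this ⊢
        linarith
      have hsplit : z ^ (p.1 - p.2) * z ^ p.2 - z ^ (p.1 - p.2) * (z ^ 3) ^ p.2
          = z ^ (p.1 - p.2) * z ^ p.2 * (1 - z ^ (2 * p.2)) := by
        rw [← pow_mul]
        have : z ^ (3 * p.2) = z ^ p.2 * z ^ (2 * p.2) := by
          rw [← pow_add]; ring_nf
        rw [this]; ring
      have hnum0 : 0 ≤ z ^ (p.1 - p.2) * z ^ p.2 := by positivity
      have hnum : z ^ (p.1 - p.2) * z ^ p.2 * (1 - z ^ (2 * p.2))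
          ≤ z ^ (p.1 - p.2) * z ^ p.2 * (2 * p.2 * (1 - z)) := by
        apply mul_le_mul_of_nonneg_left key hnum0
      have hnumR : 0 ≤ z ^ (p.1 - p.2) * z ^ p.2 * (2 * p.2 * (1 - z)) := by
        have : (0:ℝ) ≤ 1 - z := by linarith
        positivity
      have hdenle : (p.1 : ℝ) ^ 1 * (p.2 : ℝ) ^ 2 ≤ (p.1 : ℝ) ^ 1 * (p.2 : ℝ) ^ (k - 1) := by
        apply mul_le_mul_of_nonneg_left _ (by positivity)
        exact pow_le_pow_right₀ hm2 (by omega)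
      have hdenpos : (0:ℝ) < (p.1 : ℝ) ^ 1 * (p.2 : ℝ) ^ 2 := by positivity
      have step : z ^ (p.1 - p.2) * z ^ p.2 / ((p.1 : ℝ) ^ 1 * (p.2 : ℝ) ^ (k - 1))
          - z ^ (p.1 - p.2) * (z ^ 3) ^ p.2 / ((p.1 : ℝ) ^ 1 * (p.2 : ℝ) ^ (k - 1))
          ≤ z ^ (p.1 - p.2) * z ^ p.2 * (2 * p.2 * (1 - z)) / ((p.1 : ℝ) ^ 1 * (p.2 : ℝ) ^ 2) := by
        rw [div_sub_div_same, hsplit]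
        exact div_le_div₀ hnumR hnum hdenpos hdenle
      have heq : z ^ (p.1 - p.2) * z ^ p.2 * (2 * p.2 * (1 - z)) / ((p.1 : ℝ) ^ 1 * (p.2 : ℝ) ^ 2)
          = 2 * (1 - z) * (z ^ (p.1 - p.2) * z ^ p.2 / ((p.1 : ℝ) ^ 1 * (p.2 : ℝ) ^ 1)) := by
        have hm2ne : (p.2 : ℝ) ≠ 0 := by positivity
        have hm1ne : (p.1 : ℝ) ≠ 0 := by positivity
        field_simp
      rw [heq] at step
      exact step
    · simp [hA, hB, hC, hp]
  constructor
  · rw [hdiff]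
    exact tsum_nonneg hnonneg
  · rw [hdiff]
    have h2 : rLi2 1 1 z z = ∑' p, C p := rfl
    calc ∑' p, (A p - B p) ≤ ∑' p, 2 * (1 - z) * C p :=
          Summable.tsum_le_tsum hbound (hAs.sub hBs) (hCs.mul_left _)
      _ = 2 * (1 - z) * ∑' p, C p := Summable.tsum_mul_left _ hCs
      _ = 2 * (1 - z) * rLi2 1 1 z z := by rw [h2]
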